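/- Assume the Bauer–Bennett bound: for integers p and q = 2^k with k > 2, |√2 - p/q| > q^{-1.48}. Then for every integer t ≥ 11, 2^{2t+3} - ⌊2^{t+3/2}⌋^2 > 16t - 1, and hence x^2 = 2^{2t+3} - 16t + 1 has no integer solution x for t ≥ 11. -/
import Mathlib

lemma helper_rpow (a : ℝ) (ha : 0 ≤ a) (n : ℕ) (h : a ^ 25 < 2 ^ n) :
    a < (2 : ℝ) ^ ((n : ℝ) / 25) := by
  by_contra hle
  push_neg at hle
  have h2 : (0:ℝ) ≤ (2:ℝ) ^ ((n:ℝ)/25) := (Real.rpow_pos_of_pos two_pos _).le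
  have h3 : ((2:ℝ) ^ ((n:ℝ)/25)) ^ (25:ℕ) ≤ a ^ 25 := pow_le_pow_left₀ h2 hle 25
  rw [← Real.rpow_natCast ((2:ℝ) ^ ((n:ℝ)/25)) 25, ← Real.rpow_mul (by norm_num)] at h3
  have he : (n:ℝ)/25 * ((25:ℕ):ℝ) = (n:ℝ) := by push_cast; ring
  rw [he, Real.rpow_natCast] at h3
  linarith

lemma keyB : ∀ t : ℕ, 11 ≤ t → 16 * (t:ℝ) - 1 < 2.41 * (2:ℝ) ^ ((0.52 : ℝ) * ((t:ℝ) + 1)) := by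
  intro t ht
  induction t, ht using Nat.le_induction with
  | base =>
    have h73 : (73:ℝ) < (2:ℝ) ^ ((156:ℝ)/25) :=
      helper_rpow 73 (by norm_num) 156 (by norm_num)
    have he : (0.52:ℝ) * (((11:ℕ):ℝ) + 1) = ((156:ℕ):ℝ)/25 := by norm_num
    rw [he]
    push_cast
    nlinarith [h73]
  | succ t ht ih =>
    have h14 : (1.4:ℝ) < (2:ℝ) ^ ((13:ℝ)/25) :=
      helper_rpow 1.4 (by norm_num) 13 (by norm_num)
    have hsplit : (2:ℝ) ^ ((0.52:ℝ) * (((t+1:ℕ):ℝ) + 1))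
        = (2:ℝ) ^ ((0.52:ℝ) * ((t:ℝ) + 1)) * (2:ℝ) ^ ((13:ℝ)/25) := by
      rw [← Real.rpow_add two_pos]
      push_cast
      norm_num
      ring_nf
    rw [hsplit]
    have hpos : (0:ℝ) < (2:ℝ) ^ ((0.52:ℝ) * ((t:ℝ) + 1)) := Real.rpow_pos_of_pos two_pos _
    have htR : (11:ℝ) ≤ (t:ℝ) := by exact_mod_cast ht
    push_cast
    nlinarith [ih, h14, hpos, mul_lt_mul_of_pos_left h14 hpos]

theorem stmt_13
    (hBB : ∀ k : ℕ, 2 < k → ∀ p : ℤ,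
      |Real.sqrt 2 - (p : ℝ) / 2 ^ k| > ((2 : ℝ) ^ k) ^ (-(1.48) : ℝ)) :
    ∀ t : ℕ, 11 ≤ t →
      (2 : ℤ) ^ (2 * t + 3) - ⌊(2 : ℝ) ^ (t + 1) * Real.sqrt 2⌋ ^ 2 > 16 * (t : ℤ) - 1 ∧
      ¬ ∃ x : ℤ, x ^ 2 = 2 ^ (2 * t + 3) - 16 * t + 1 := by
  intro t ht
  set k := t + 1 with hk
  set s : ℝ := (2:ℝ) ^ k * Real.sqrt 2 with hs
  set m : ℤ := ⌊s⌋ with hm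
  have hq : (0:ℝ) < (2:ℝ) ^ k := by positivity
  have hsqrt2 : (1.41:ℝ) < Real.sqrt 2 := by
    nlinarith [Real.sq_sqrt (by norm_num : (0:ℝ) ≤ 2), Real.sqrt_nonneg 2]
  have hm_le : (m:ℝ) ≤ s := Int.floor_le s
  have hm_lt : s < (m:ℝ) + 1 := Int.lt_floor_add_one s
  have hmlow : (2:ℤ)^k ≤ m := by
    rw [hm, Int.le_floor]
    push_cast
    nlinarith [hq]
  have hmlowR : (2:ℝ)^k ≤ (m:ℝ) := by exact_mod_cast hmlow
  have hk2 : 2 < k := by omega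
  have h1 : Real.sqrt 2 - (m:ℝ)/2^k > ((2:ℝ)^k)^(-(1.48):ℝ) := by
    have h := hBB k hk2 m
    have hfrac : (m:ℝ)/2^k ≤ Real.sqrt 2 := by
      rw [div_le_iff₀ hq]
      rw [mul_comm]
      exact hm_le
    rwa [abs_of_nonneg (by linarith)] at h
  have h2 : s - (m:ℝ) > (2:ℝ)^k * ((2:ℝ)^k)^(-(1.48):ℝ) := by
    have h' := mul_lt_mul_of_pos_left h1 hq
    have e : (2:ℝ)^k * (Real.sqrt 2 - (m:ℝ)/2^k) = s - (m:ℝ) := by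
      field_simp [hs]
      ring
    linarith [e ▸ h']
  have h3 : s + (m:ℝ) > 2.41 * (2:ℝ)^k := by
    nlinarith [hsqrt2, hq, hmlowR]
  have hdiff : s^2 - (m:ℝ)^2 > ((2:ℝ)^k * ((2:ℝ)^k)^(-(1.48):ℝ)) * (2.41 * (2:ℝ)^k) := by
    have e : s^2 - (m:ℝ)^2 = (s - m) * (s + m) := by ring
    rw [e]
    have ha : (0:ℝ) ≤ (2:ℝ)^k * ((2:ℝ)^k)^(-(1.48):ℝ) :=
      le_of_lt (mul_pos hq (Real.rpow_pos_of_pos hq _))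
    have hc : (0:ℝ) ≤ 2.41 * (2:ℝ)^k := by positivity
    exact mul_lt_mul'' h2 h3 ha hc
  have hrw : ((2:ℝ)^k * ((2:ℝ)^k)^(-(1.48):ℝ)) * (2.41 * (2:ℝ)^k)
      = 2.41 * (2:ℝ) ^ ((0.52:ℝ) * ((t:ℝ) + 1)) := by
    have e1 : ((2:ℝ)^k)^(-(1.48):ℝ) = (2:ℝ)^((k:ℝ)*(-(1.48))) := by
      rw [← Real.rpow_natCast 2 k, ← Real.rpow_mul (by norm_num)]
    have e2 : (2:ℝ)^k = (2:ℝ)^((k:ℝ)) := (Real.rpow_natCast 2 k).symm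
    rw [e1, e2]
    rw [show (2:ℝ)^((k:ℝ)) * (2:ℝ)^((k:ℝ)*(-(1.48))) * (2.41 * (2:ℝ)^((k:ℝ)))
        = 2.41 * ((2:ℝ)^((k:ℝ)) * ((2:ℝ)^((k:ℝ)*(-(1.48))) * (2:ℝ)^((k:ℝ)))) by ring]
    rw [← Real.rpow_add two_pos, ← Real.rpow_add two_pos]
    congr 1
    have : (k:ℝ) = (t:ℝ) + 1 := by rw [hk]; push_cast; ring
    rw [this]
    ring
  have hB := keyB t ht
  have hs2 : s^2 = (2:ℝ)^(2*t+3) := by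
    rw [hs, mul_pow, Real.sq_sqrt (by norm_num : (0:ℝ) ≤ 2), ← pow_mul, ← pow_succ]
    congr 1
    omega
  have hmainR : (2:ℝ)^(2*t+3) - (m:ℝ)^2 > 16*(t:ℝ) - 1 := by
    rw [← hs2]
    calc s^2 - (m:ℝ)^2 > _ := hdiff
      _ = 2.41 * (2:ℝ) ^ ((0.52:ℝ) * ((t:ℝ) + 1)) := hrw
      _ > 16*(t:ℝ) - 1 := hB
  have hpart1 : (2:ℤ)^(2*t+3) - m^2 > 16*(t:ℤ) - 1 := by
    have : (((2:ℤ)^(2*t+3) - m^2 : ℤ) : ℝ) > ((16*(t:ℤ) - 1 : ℤ) : ℝ) := by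
      push_cast
      convert hmainR using 2
    exact_mod_cast this
  refine ⟨hpart1, ?_⟩
  rintro ⟨x, hx⟩
  have htZ : (11:ℤ) ≤ (t:ℤ) := by exact_mod_cast ht
  have hx2 : m^2 < x^2 := by
    rw [hx]; linarith
  have hm0 : (0:ℤ) ≤ m := le_trans (by positivity) hmlow
  have habs : m < |x| := by
    by_contra hc
    push_neg at hc
    have := pow_le_pow_left₀ (abs_nonneg x) hc 2
    rw [sq_abs] at this
    linarith
  have h1x : m + 1 ≤ |x| := Int.add_one_le_iff.mpr habs
  have hupR : (2:ℝ)^(2*t+3) < ((m:ℝ)+1)^2 := by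
    have hs0 : (0:ℝ) ≤ s := by positivity
    nlinarith [hm_lt, hs2, hs0]
  have hupZ : (2:ℤ)^(2*t+3) < (m+1)^2 := by
    have : (((2:ℤ)^(2*t+3) : ℤ) : ℝ) < (((m+1)^2 : ℤ) : ℝ) := by push_cast; exact hupR
    exact_mod_cast this
  have hxup : (m+1)^2 ≤ x^2 := by
    have := pow_le_pow_left₀ (by linarith : (0:ℤ) ≤ m + 1) h1x 2
    rwa [sq_abs] at this
  omega
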